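/- For every α > 0 and every non-degenerate normalized class adjacency matrix C of size m×m, if C' is the (m+1)×(m+1) matrix obtained from C by appending a row and a column of zeros (C'_{ij} = c_ij for i,j ≤ m and C'_{ij} = 0 otherwise), then h_unb^α(C') = h_unb^α(C) (empty class tolerance). -/
import Mathlib


/-- A normalized class adjacency matrix: symmetric, nonnegative entries, entries sum to 1. -/
def IsNCAM {m : ℕ} (C : Matrix (Fin m) (Fin m) ℝ) : Prop :=
  (∀ i j, C i j = C j i) ∧ (∀ i j, 0 ≤ C i j) ∧ (∑ i : Fin m, ∑ j : Fin m, C i j = 1)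

/-- Non-degenerate: at least two nonzero entries. -/
def Nondeg {m : ℕ} (C : Matrix (Fin m) (Fin m) ℝ) : Prop :=
  ∃ p q : Fin m × Fin m, p ≠ q ∧ C p.1 p.2 ≠ 0 ∧ C q.1 q.2 ≠ 0

/-- Unbiased homophily (α = 0). -/
noncomputable def hUnb {m : ℕ} (C : Matrix (Fin m) (Fin m) ℝ) : ℝ :=
  (∑ i : Fin m, ∑ j : Fin m, if i < j then Real.sqrt (C i i * C j j) - C i j else 0) /
  (∑ i : Fin m, ∑ j : Fin m, if i < j then Real.sqrt (C i i * C j j) + C i j else 0)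

/-- Unbiased homophily with parameter α. -/
noncomputable def hUnbAlpha {m : ℕ} (α : ℝ) (C : Matrix (Fin m) (Fin m) ℝ) : ℝ :=
  hUnb C + α * min (∑ i : Fin m, Real.sqrt (C i i)) 1
/-- empty class tolerance of h_unb^α. -/
theorem empty_class_tolerance {m : ℕ} (α : ℝ) (hα : 0 < α)
    (C : Matrix (Fin m) (Fin m) ℝ) (hC : IsNCAM C) (hnd : Nondeg C)
    (C' : Matrix (Fin (m + 1)) (Fin (m + 1)) ℝ)
    (hpad : ∀ i j : Fin m, C' i.castSucc j.castSucc = C i j)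
    (hzero : ∀ i j : Fin (m + 1), i = Fin.last m ∨ j = Fin.last m → C' i j = 0) :
    hUnbAlpha α C' = hUnbAlpha α C := by
  have hlast : ∀ j : Fin (m+1), ¬ (Fin.last m < j) := fun j => Fin.not_lt.mpr (Fin.le_last j)
  have hz1 : ∀ j, C' (Fin.last m) j = 0 := fun j => hzero _ j (Or.inl rfl)
  have hz2 : ∀ i, C' i (Fin.last m) = 0 := fun i => hzero i _ (Or.inr rfl)
  have hnum : ∀ s : ℝ, (∑ i : Fin (m+1), ∑ j : Fin (m+1),
      if i < j then Real.sqrt (C' i i * C' j j) + s * C' i j else 0)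
      = ∑ i : Fin m, ∑ j : Fin m,
      if i < j then Real.sqrt (C i i * C j j) + s * C i j else 0 := by
    intro s
    rw [Fin.sum_univ_castSucc]
    simp only [hlast, if_false, Finset.sum_const_zero, add_zero]
    refine Finset.sum_congr rfl fun i _ => ?_
    rw [Fin.sum_univ_castSucc]
    simp [hz1, hz2, hpad, Fin.castSucc_lt_castSucc_iff]
  have hdiag : (∑ i : Fin (m+1), Real.sqrt (C' i i)) = ∑ i : Fin m, Real.sqrt (C i i) := by
    rw [Fin.sum_univ_castSucc]
    simp [hz1, hpad]
  have h1 := hnum (-1)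
  have h2 := hnum 1
  simp only [one_mul, neg_one_mul, ← sub_eq_add_neg] at h1 h2
  unfold hUnbAlpha hUnb
  rw [h1, h2, hdiag]
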